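/- The image of Φ_n restricted to symmetric (2n)-cores with first part equal to k is contained in the set of symmetric (2n−2)-cores with first part at most k − ⌈k/n⌉. -/

import Mathlib

/-! Partitions and cores, represented by their row-length functions `ℕ → ℕ` (0-indexed rows). -/

/-- The length of column `j` (the conjugate partition). -/
noncomputable def colLen (f : ℕ → ℕ) (j : ℕ) : ℕ := Nat.card {i : ℕ | j < f i}

/-- `f` is a partition: weakly decreasing and eventually zero. -/
def IsPartition (f : ℕ → ℕ) : Prop := Antitone f ∧ ∃ N, ∀ i, N ≤ i → f i = 0

/-- Hook length of the box `(i, j)` (0-indexed). -/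
noncomputable def hook (f : ℕ → ℕ) (i j : ℕ) : ℕ := (f i - j) + (colLen f j - i) - 1

/-- `f` is an `m`-core: no hook length of a box of `f` is divisible by `m`. -/
def IsCore (m : ℕ) (f : ℕ → ℕ) : Prop := ∀ i j, j < f i → ¬ (m ∣ hook f i j)

/-- `f` is symmetric: it equals its conjugate. -/
def IsSymmetric (f : ℕ → ℕ) : Prop := ∀ j, colLen f j = f j

/-- Residue (mod `2n`) of the last box of row `i`, namely `j - i` for `j = f i - 1`. -/
noncomputable def rowRes (n : ℕ) (f : ℕ → ℕ) (i : ℕ) : ZMod (2*n) :=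
  (((f i : ℤ) - 1 - (i : ℤ) : ℤ) : ZMod (2*n))

/-- Residue (mod `2n`) of the last box of column `j`. -/
noncomputable def colRes (n : ℕ) (f : ℕ → ℕ) (j : ℕ) : ZMod (2*n) :=
  (((j : ℤ) - ((colLen f j : ℤ) - 1) : ℤ) : ZMod (2*n))

/-- Row `i` survives: it is nonempty and does not end in the same residue as the first row. -/
noncomputable def keptRow (n : ℕ) (f : ℕ → ℕ) (i : ℕ) : Prop :=
  0 < f i ∧ rowRes n f i ≠ rowRes n f 0

/-- Column `j` survives: it is nonempty and does not end in the same residue as the first column. -/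
noncomputable def keptCol (n : ℕ) (f : ℕ → ℕ) (j : ℕ) : Prop :=
  0 < colLen f j ∧ colRes n f j ≠ colRes n f 0

/-- The map `Φₙ` on cores: delete all rows ending in the same residue (mod `2n`) as the
first row and all columns ending in the same residue as the first column.  The `i`-th row of
the result is the number of surviving columns meeting the `i`-th surviving row. -/
noncomputable def PhiCore (n : ℕ) (f : ℕ → ℕ) : ℕ → ℕ := fun i =>
  Nat.card {j : ℕ | keptRow n f (Nat.nth (keptRow n f) i) ∧ keptCol n f j ∧
    j < f (Nat.nth (keptRow n f) i)}

/-- Delete from `f` all columns ending in the same residue (mod `2n`) as the first column. -/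
noncomputable def deleteColsCore (n : ℕ) (f : ℕ → ℕ) : ℕ → ℕ := fun i =>
  Nat.card {j : ℕ | keptCol n f j ∧ j < f i}


namespace Stmt3Aux

lemma downset_eq_Iio {S : Set ℕ} (hS : S.Finite)
    (hdown : ∀ ⦃x y⦄, x ≤ y → y ∈ S → x ∈ S) : S = Set.Iio (Nat.card S) := by
  ext x
  simp only [Set.mem_Iio]
  constructor
  · intro hx
    have h1 : Set.Iic x ⊆ S := fun y hy => hdown hy hx
    have h2 : Nat.card (Set.Iic x) ≤ Nat.card S :=
      Nat.card_mono hS (by exact_mod_cast h1)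
    have h3 : Nat.card (Set.Iic x) = x + 1 := by
      rw [Nat.card_eq_card_toFinset]; simp [Set.toFinset_Iic]
    omega
  · intro hx
    by_contra hxS
    have h1 : S ⊆ Set.Iio x := by
      intro y hy
      simp only [Set.mem_Iio]
      by_contra hyx
      exact hxS (hdown (le_of_not_gt hyx) hy)
    have h2 : Nat.card S ≤ Nat.card (Set.Iio x) :=
      Nat.card_mono (Set.finite_Iio x) (by exact_mod_cast h1)
    have h3 : Nat.card (Set.Iio x) = x := by
      rw [Nat.card_eq_card_toFinset]; simp [Set.toFinset_Iio]
    omega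

section Partition

variable {f : ℕ → ℕ}

lemma colSet_eq (hf : IsPartition f) (j : ℕ) : {i : ℕ | j < f i} = Set.Iio (colLen f j) := by
  obtain ⟨hanti, N, hN⟩ := hf
  exact downset_eq_Iio
    ((Set.finite_Iio N).subset (fun i hi => by
      simp only [Set.mem_setOf_eq] at hi
      simp only [Set.mem_Iio]
      by_contra h
      rw [hN i (le_of_not_gt h)] at hi
      omega))
    (fun x y hxy hy => lt_of_lt_of_le hy (hanti hxy))

lemma lt_iff_lt_colLen (hf : IsPartition f) {i j : ℕ} : j < f i ↔ i < colLen f j := by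
  constructor
  · intro h
    have : i ∈ {i : ℕ | j < f i} := h
    rwa [colSet_eq hf j] at this
  · intro h
    have : i ∈ Set.Iio (colLen f j) := h
    rw [← colSet_eq hf j] at this
    exact this

/-- The "beta number" of row `i` : position of the vertical step of row `i`. -/
noncomputable def aB (f : ℕ → ℕ) (i : ℕ) : ℤ := (f i : ℤ) - 1 - i

/-- Position of the horizontal step of column `j`. -/
noncomputable def cB (f : ℕ → ℕ) (j : ℕ) : ℤ := (j : ℤ) - colLen f j

lemma aB_anti (hf : IsPartition f) : Antitone (aB f) := by
  intro i i' h
  have := hf.1 h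
  unfold aB; push_cast; omega

lemma aB_strictAnti (hf : IsPartition f) : StrictAnti (aB f) := by
  intro i i' h
  have := hf.1 h.le
  unfold aB; push_cast; omega

lemma box_iff (hf : IsPartition f) {i j : ℕ} : cB f j < aB f i ↔ j < f i := by
  unfold aB cB
  constructor
  · intro h
    by_contra hb
    have h1 : colLen f j ≤ i := by
      by_contra h2
      exact hb ((lt_iff_lt_colLen hf).2 (lt_of_not_ge h2))
    have h1' : (colLen f j : ℤ) ≤ i := by exact_mod_cast h1
    have hb' : (f i : ℤ) ≤ j := by
      push_cast at hb ⊢; omega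
    omega
  · intro h
    have h1 : i < colLen f j := (lt_iff_lt_colLen hf).1 h
    have h1' : (i : ℤ) < colLen f j := by exact_mod_cast h1
    have h' : (j : ℤ) < f i := by exact_mod_cast h
    omega

lemma aB_ne_cB (hf : IsPartition f) (i j : ℕ) : aB f i ≠ cB f j := by
  rcases lt_or_ge j (f i) with h | h
  · have := (box_iff hf).2 h; omega
  · have h1 : colLen f j ≤ i := by
      by_contra h2
      exact absurd ((lt_iff_lt_colLen hf).2 (lt_of_not_ge h2)) (not_lt.2 h)
    have h' : (f i : ℤ) ≤ j := by exact_mod_cast h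
    have h1' : (colLen f j : ℤ) ≤ i := by exact_mod_cast h1
    unfold aB cB
    omega

lemma hook_cast (hf : IsPartition f) {i j : ℕ} (h : j < f i) :
    (hook f i j : ℤ) = aB f i - cB f j := by
  have h1 : i < colLen f j := (lt_iff_lt_colLen hf).1 h
  have e : hook f i j = f i + colLen f j - (i + j + 1) := by unfold hook; omega
  rw [e]
  have : i + j + 1 ≤ f i + colLen f j := by omega
  push_cast [Nat.cast_sub this]
  unfold aB cB; push_cast; ring

lemma hook_pos (hf : IsPartition f) {i j : ℕ} (h : j < f i) : 0 < hook f i j := by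
  have h1 : i < colLen f j := (lt_iff_lt_colLen hf).1 h
  unfold hook; omega

/-- The number of beta numbers `≥ x`. -/
noncomputable def Afun (f : ℕ → ℕ) (x : ℤ) : ℕ := Nat.card {i : ℕ | x ≤ aB f i}

lemma Aset_eq (hf : IsPartition f) (x : ℤ) :
    {i : ℕ | x ≤ aB f i} = Set.Iio (Afun f x) := by
  apply downset_eq_Iio
  · apply (Set.finite_Iio ((f 0 : ℤ) - x).toNat).subset
    intro i hi
    simp only [Set.mem_setOf_eq] at hi
    simp only [Set.mem_Iio]
    have h2 : f i ≤ f 0 := hf.1 (Nat.zero_le i)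
    have h2' : (f i : ℤ) ≤ f 0 := by exact_mod_cast h2
    unfold aB at hi
    rw [Int.lt_toNat]
    omega
  · intro x' y hxy hy
    simp only [Set.mem_setOf_eq] at *
    exact le_trans hy (aB_anti hf hxy)

lemma cB_lt_iff (hf : IsPartition f) (x : ℤ) (j : ℕ) :
    cB f j < x ↔ (j : ℤ) < x + Afun f x := by
  rcases lt_or_ge (j : ℤ) x with h | h
  · constructor
    · intro _; have : (0:ℤ) ≤ Afun f x := by positivity
      omega
    · intro _
      unfold cB
      have : (0:ℤ) ≤ colLen f j := by positivity
      omega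
  · set m := ((j : ℤ) - x).toNat with hm
    have hm' : (m : ℤ) = (j : ℤ) - x := Int.toNat_of_nonneg (by omega)
    have key : x ≤ aB f m ↔ m < Afun f x := by
      constructor
      · intro hx
        have : m ∈ {i : ℕ | x ≤ aB f i} := hx
        rwa [Aset_eq hf] at this
      · intro hx
        have : m ∈ Set.Iio (Afun f x) := hx
        rw [← Aset_eq hf] at this
        exact this
    have key2 : (j:ℤ) < f m ↔ m < colLen f j := by
      constructor
      · intro h2
        exact_mod_cast (lt_iff_lt_colLen hf).1 (by exact_mod_cast h2)
      · intro h2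
        exact_mod_cast (lt_iff_lt_colLen hf).2 h2
    unfold aB at key
    unfold cB
    constructor
    · intro h2
      have h3 : m < colLen f j := by omega
      have h4 := key2.2 h3
      have h5 : x ≤ (f m : ℤ) - 1 - m := by omega
      have h6 := key.1 h5
      omega
    · intro h2
      have h6 : m < Afun f x := by omega
      have h5 := key.2 h6
      have h4 : (j:ℤ) < f m := by omega
      have h3 := key2.1 h4
      omega

/-- Every integer not a beta number is a `cB` value. -/
lemma exists_cB_eq (hf : IsPartition f) {x : ℤ} (hx : ∀ i, aB f i ≠ x) :
    ∃ j : ℕ, cB f j = x := by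
  have hA : Afun f x = Afun f (x + 1) := by
    have hset : {i : ℕ | x ≤ aB f i} = {i : ℕ | x + 1 ≤ aB f i} := by
      ext i
      simp only [Set.mem_setOf_eq]
      have := hx i
      omega
    unfold Afun
    rw [hset]
  have hnn : 0 ≤ x + Afun f x := by
    rcases le_or_gt 0 x with h | h
    · positivity
    · have : (-x).toNat ≤ Afun f x := by
        have hsub : Set.Iio ((-x).toNat) ⊆ {i : ℕ | x ≤ aB f i} := by
          intro i hi
          simp only [Set.mem_Iio] at hi
          simp only [Set.mem_setOf_eq]
          have hi' : (i : ℤ) < -x := Int.lt_toNat.1 hi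
          unfold aB
          have : (0:ℤ) ≤ f i := by positivity
          omega
        rw [Aset_eq hf] at hsub
        exact Set.Iio_subset_Iio_iff.1 hsub
      have h2 : ((-x).toNat : ℤ) = -x := Int.toNat_of_nonneg (by omega)
      omega
  set j := (x + Afun f x).toNat with hj
  have hj' : (j : ℤ) = x + Afun f x := Int.toNat_of_nonneg hnn
  have h1 : ¬ (cB f j < x) := by
    rw [cB_lt_iff hf]; omega
  have h2 : cB f j < x + 1 := by
    rw [cB_lt_iff hf, ← hA]; omega
  exact ⟨j, by omega⟩

/-- Cores: beta set closed under subtracting `m`. -/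
lemma core_closure (hf : IsPartition f) {m : ℕ} (hm : 0 < m) (hc : IsCore m f)
    {x : ℤ} (hx : ∃ i, aB f i = x) : ∃ i, aB f i = x - m := by
  obtain ⟨i, rfl⟩ := hx
  rcases Nat.eq_zero_or_pos (f i) with h0 | h0
  · refine ⟨i + m, ?_⟩
    have : f (i + m) = 0 := Nat.eq_zero_of_le_zero (h0 ▸ hf.1 (Nat.le_add_right i m))
    unfold aB; rw [this, h0]; push_cast; ring
  · by_contra hne
    push_neg at hne
    obtain ⟨j, hj⟩ := exists_cB_eq hf (fun t => hne t)
    have hbox : j < f i := by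
      apply (box_iff hf).1
      have : (0:ℤ) < m := by exact_mod_cast hm
      omega
    have := hook_cast hf hbox
    have hhook : hook f i j = m := by omega
    exact hc i j hbox (hhook ▸ dvd_refl m)

/-- Conversely: if the beta set is closed under subtracting `m` and the partition is
symmetric, it is an `m`-core. -/
lemma closure_core (hg : IsPartition f) {m : ℕ} (hm : 0 < m)
    (hsym : ∀ j, colLen f j = f j)
    (hcl : ∀ x : ℤ, (∃ i, aB f i = x) → ∃ i, aB f i = x - m) : IsCore m f := by
  intro i j hbox hdvd
  obtain ⟨q, hq⟩ := hdvd
  have hpos := hook_pos hg hbox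
  have hcast := hook_cast hg hbox
  have hall : ∀ t : ℕ, ∃ i', aB f i' = aB f i - m * t := by
    intro t
    induction t with
    | zero => exact ⟨i, by push_cast; ring⟩
    | succ s ih =>
      obtain ⟨i', hi'⟩ := hcl _ ih
      exact ⟨i', by rw [hi']; push_cast; ring⟩
  obtain ⟨i', hi'⟩ := hall q
  have hcB : cB f j = -1 - aB f j := by
    unfold cB aB; rw [hsym j]; ring
  have h2 : (m:ℤ) * q = aB f i - cB f j := by
    rw [← hcast, hq]; push_cast; ring
  have : aB f i' = cB f j := by rw [hi', h2]; ring
  exact aB_ne_cB hg i' j this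

end Partition


section SymCore

variable {n k : ℕ} {f : ℕ → ℕ}

/-- The beta set as an existence predicate. -/
def Bead (f : ℕ → ℕ) (x : ℤ) : Prop := ∃ i, aB f i = x

variable (hn : 2 ≤ n) (hk : 1 ≤ k) (hf : IsPartition f)
  (hc : IsCore (2*n) f) (hs : IsSymmetric f) (hk0 : f 0 = k)

lemma cB_eq_neg (hs : IsSymmetric f) (j : ℕ) : cB f j = -1 - aB f j := by
  unfold cB aB; rw [hs j]; ring

lemma sym_not_bead (hf : IsPartition f) (hs : IsSymmetric f) {x : ℤ}
    (hx : Bead f x) : ¬ Bead f (-1 - x) := by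
  obtain ⟨i, rfl⟩ := hx
  rintro ⟨t, ht⟩
  exact aB_ne_cB hf t i (by rw [ht, cB_eq_neg hs])

lemma sym_bead (hf : IsPartition f) (hs : IsSymmetric f) {x : ℤ}
    (hx : ¬ Bead f x) : Bead f (-1 - x) := by
  obtain ⟨j, hj⟩ := exists_cB_eq hf (fun i hi => hx ⟨i, hi⟩)
  rw [cB_eq_neg hs] at hj
  exact ⟨j, by omega⟩

lemma pos_iff_lt_k (hf : IsPartition f) (hs : IsSymmetric f) (hk0 : f 0 = k) (i : ℕ) :
    0 < f i ↔ i < k := by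
  have := lt_iff_lt_colLen hf (i := i) (j := 0)
  rw [hs 0, hk0] at this
  exact this

lemma bead_le (hf : IsPartition f) (hk0 : f 0 = k) {x : ℤ} (hx : Bead f x) :
    x ≤ (k:ℤ) - 1 := by
  obtain ⟨i, rfl⟩ := hx
  have h1 : f i ≤ k := hk0 ▸ hf.1 (Nat.zero_le i)
  have h1' : (f i : ℤ) ≤ k := by exact_mod_cast h1
  unfold aB
  have : (0:ℤ) ≤ i := by positivity
  omega

lemma low_bead (hf : IsPartition f) (hs : IsSymmetric f) (hk0 : f 0 = k) {x : ℤ}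
    (hx : x ≤ -(k:ℤ) - 1) : Bead f x := by
  refine ⟨(-1 - x).toNat, ?_⟩
  have hk' : (k:ℤ) ≤ (-1 - x).toNat := by
    have h := Int.toNat_of_nonneg (show (0:ℤ) ≤ -1 - x by omega)
    omega
  have h0 : f ((-1 - x).toNat) = 0 := by
    by_contra h
    have := (pos_iff_lt_k hf hs hk0 ((-1-x).toNat)).1 (Nat.pos_of_ne_zero h)
    have : ((-1 - x).toNat : ℤ) < k := by exact_mod_cast this
    omega
  unfold aB
  rw [h0]
  have : ((-1 - x).toNat : ℤ) = -1 - x := Int.toNat_of_nonneg (by omega)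
  omega

lemma bead_row (hf : IsPartition f) (hs : IsSymmetric f) (hk0 : f 0 = k) {x : ℤ}
    (hx : Bead f x) (hge : -(k:ℤ) ≤ x) : ∃ i, i < k ∧ 0 < f i ∧ aB f i = x := by
  obtain ⟨i, rfl⟩ := hx
  rcases Nat.eq_zero_or_pos (f i) with h0 | h0
  · exfalso
    have hik : ¬ (i < k) := fun h => by
      have := (pos_iff_lt_k hf hs hk0 i).2 h; omega
    have : (k:ℤ) ≤ i := by exact_mod_cast Nat.le_of_not_gt hik
    unfold aB at hge
    rw [h0] at hge
    push_cast at hge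
    omega
  · exact ⟨i, (pos_iff_lt_k hf hs hk0 i).1 h0, h0, rfl⟩

lemma aB_zero (hk0 : f 0 = k) : aB f 0 = (k:ℤ) - 1 := by
  unfold aB; rw [hk0]; push_cast; ring

lemma runner_r (hf : IsPartition f) (hn : 2 ≤ n) (hc : IsCore (2*n) f) (hk0 : f 0 = k)
    (t : ℕ) : Bead f ((k:ℤ) - 1 - 2*n*t) := by
  induction t with
  | zero => exact ⟨0, by rw [aB_zero hk0]; push_cast; ring⟩
  | succ s ih =>
    obtain ⟨i, hi⟩ := core_closure hf (by omega) hc ih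
    exact ⟨i, by rw [hi]; push_cast; ring⟩

lemma runner_r' (hf : IsPartition f) (hn : 2 ≤ n) (hc : IsCore (2*n) f) (hk0 : f 0 = k)
    {x : ℤ} (hle : x ≤ (k:ℤ) - 1) (hdvd : (2*n:ℤ) ∣ ((k:ℤ) - 1 - x)) : Bead f x := by
  obtain ⟨t, ht⟩ := hdvd
  have htnn : 0 ≤ t := by nlinarith [ht]
  have : x = (k:ℤ) - 1 - 2*n*(t.toNat) := by
    rw [Int.toNat_of_nonneg htnn]; omega
  rw [this]
  exact runner_r hf hn hc hk0 t.toNat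

lemma hole_h (hf : IsPartition f) (hn : 2 ≤ n) (hc : IsCore (2*n) f) (hs : IsSymmetric f)
    (hk0 : f 0 = k) {x : ℤ} (hge : -(k:ℤ) ≤ x) (hdvd : (2*n:ℤ) ∣ (x + k)) : ¬ Bead f x := by
  intro hx
  have hb : Bead f (-1 - x) := by
    apply runner_r' hf hn hc hk0 (by omega)
    have : (k:ℤ) - 1 - (-1 - x) = x + k := by ring
    rw [this]; exact hdvd
  exact sym_not_bead hf hs hb (by simpa using hx)

/-- `rowRes` in terms of `aB`. -/
lemma rowRes_eq (i : ℕ) : rowRes n f i = ((aB f i : ℤ) : ZMod (2*n)) := rfl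

lemma rowRes_eq_iff (hk0 : f 0 = k) (i : ℕ) :
    rowRes n f i = rowRes n f 0 ↔ (2*n:ℤ) ∣ (aB f i - ((k:ℤ)-1)) := by
  rw [rowRes_eq, rowRes_eq, aB_zero hk0, ZMod.intCast_eq_intCast_iff]
  rw [Int.ModEq]
  constructor
  · intro h
    have := Int.ModEq.dvd (a := aB f i) (b := (k:ℤ)-1) (n := (2*n:ℕ)) h
    have h2 : ((2*n:ℕ):ℤ) = (2*n:ℤ) := by push_cast; ring
    rw [h2] at this
    rw [show aB f i - ((k:ℤ)-1) = -(((k:ℤ)-1) - aB f i) by ring]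
    exact dvd_neg.mpr this
  · intro h
    have : aB f i ≡ (k:ℤ)-1 [ZMOD (2*n:ℕ)] := by
      rw [Int.modEq_iff_dvd, show ((k:ℤ)-1) - aB f i = -(aB f i - ((k:ℤ)-1)) by ring]
      push_cast
      exact dvd_neg.mpr h
    exact this

lemma keptRow_iff (hf : IsPartition f) (hs : IsSymmetric f) (hk0 : f 0 = k) (i : ℕ) :
    keptRow n f i ↔ (i < k ∧ ¬ (2*n:ℤ) ∣ (aB f i - ((k:ℤ)-1))) := by
  unfold keptRow
  rw [pos_iff_lt_k hf hs hk0]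
  exact and_congr_right fun _ => not_congr (rowRes_eq_iff hk0 i)

lemma colRes_eq_neg (hs : IsSymmetric f) (j : ℕ) :
    colRes n f j = - rowRes n f j := by
  unfold colRes rowRes
  rw [hs j]
  have : ((j:ℤ) - ((f j : ℤ) - 1)) = -(((f j : ℤ) - 1 - (j:ℤ))) := by ring
  rw [this, Int.cast_neg]

lemma keptCol_iff_keptRow (hs : IsSymmetric f) (j : ℕ) :
    keptCol n f j ↔ keptRow n f j := by
  unfold keptCol keptRow
  rw [hs j, colRes_eq_neg hs, colRes_eq_neg hs]
  simp [neg_inj]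

end SymCore

section Counting

/-- `(Set.Iio t).ncard = t` for naturals. -/
lemma ncard_natIio (t : ℕ) : (Set.Iio t).ncard = t := by
  rw [← Nat.card_coe_set_eq, Nat.card_eq_card_toFinset]
  simp [Set.toFinset_Iio]

lemma card_setOf_and_lt (p : ℕ → Prop) [DecidablePred p] (t : ℕ) :
    Nat.card {j : ℕ | p j ∧ j < t} = Nat.count p t := by
  have h : {j : ℕ | p j ∧ j < t} = ↑((Finset.range t).filter p) := by
    ext j
    simp [Finset.mem_filter, Finset.mem_range, and_comm]
  rw [h, Nat.card_coe_set_eq, Set.ncard_coe_finset, Nat.count_eq_card_filter_range]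

end Counting

section Phi

variable {n k : ℕ} {f : ℕ → ℕ}

/-- Number of kept rows below `t`. -/
noncomputable def kcnt (n : ℕ) (f : ℕ → ℕ) (t : ℕ) : ℕ :=
  Nat.card {j : ℕ | keptRow n f j ∧ j < t}

/-- Total number of kept rows. -/
noncomputable def KC (n : ℕ) (f : ℕ → ℕ) : ℕ := Nat.card (setOf (keptRow n f))

lemma kept_lt (hf : IsPartition f) (hs : IsSymmetric f) (hk0 : f 0 = k) {i : ℕ}
    (h : keptRow n f i) : i < k := ((keptRow_iff hf hs hk0 i).1 h).1

lemma Kfin (hf : IsPartition f) (hs : IsSymmetric f) (hk0 : f 0 = k) :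
    (setOf (keptRow n f)).Finite :=
  (Set.finite_Iio k).subset (fun i hi => kept_lt hf hs hk0 hi)

lemma Kfin_card (hf : IsPartition f) (hs : IsSymmetric f) (hk0 : f 0 = k) :
    (Kfin (n := n) hf hs hk0).toFinset.card = KC n f := by
  rw [← Set.ncard_eq_toFinset_card _ (Kfin hf hs hk0), KC, Nat.card_coe_set_eq]

lemma not_kept0 : ¬ keptRow n f 0 := fun h => h.2 rfl

lemma nth_kept (hf : IsPartition f) (hs : IsSymmetric f) (hk0 : f 0 = k) {i : ℕ}
    (h : i < KC n f) : keptRow n f (Nat.nth (keptRow n f) i) := by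
  apply Nat.nth_mem_of_lt_card (Kfin hf hs hk0)
  exact lt_of_lt_of_eq h (Kfin_card hf hs hk0).symm

lemma nth_zero_of_ge (hf : IsPartition f) (hs : IsSymmetric f) (hk0 : f 0 = k) {i : ℕ}
    (h : KC n f ≤ i) : Nat.nth (keptRow n f) i = 0 := by
  apply Nat.nth_of_card_le (Kfin hf hs hk0)
  exact (Kfin_card hf hs hk0).trans_le h

lemma nth_strictmono (hf : IsPartition f) (hs : IsSymmetric f) (hk0 : f 0 = k) {i i' : ℕ}
    (h : i < i') (h' : i' < KC n f) :
    Nat.nth (keptRow n f) i < Nat.nth (keptRow n f) i' := by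
  apply Nat.nth_lt_nth_of_lt_card (Kfin hf hs hk0) h
  exact lt_of_lt_of_eq h' (Kfin_card hf hs hk0).symm

lemma kcnt_nth (hf : IsPartition f) (hs : IsSymmetric f) (hk0 : f 0 = k) {i : ℕ}
    (h : i < KC n f) : kcnt n f (Nat.nth (keptRow n f) i) = i := by
  classical
  rw [kcnt, card_setOf_and_lt]
  apply Nat.count_nth_of_lt_card_finite (Kfin hf hs hk0)
  exact lt_of_lt_of_eq h (Kfin_card hf hs hk0).symm

lemma lt_kcnt_iff (hf : IsPartition f) (hs : IsSymmetric f) (hk0 : f 0 = k) {t j : ℕ} :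
    j < kcnt n f t ↔ (j < KC n f ∧ Nat.nth (keptRow n f) j < t) := by
  classical
  rw [kcnt, card_setOf_and_lt]
  constructor
  · intro h
    have h1 : Nat.count (keptRow n f) t ≤ KC n f := by
      rw [← Kfin_card (n := n) hf hs hk0]
      have := Nat.count_lt_card (Kfin (n := n) hf hs hk0) (n := t)
      by_cases ht : keptRow n f t
      · exact le_of_lt (this ht)
      · -- count p t ≤ card: count counts a subset of setOf p
        have : (Finset.range t).filter (keptRow n f) ⊆ (Kfin (n := n) hf hs hk0).toFinset := by
          intro x hx
          simp only [Finset.mem_filter] at hx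
          simp [Set.Finite.mem_toFinset]
          exact hx.2
        rw [Nat.count_eq_card_filter_range]
        exact Finset.card_le_card this
    refine ⟨lt_of_lt_of_le h h1, ?_⟩
    exact Nat.nth_lt_of_lt_count h
  · rintro ⟨hj, hlt⟩
    have h2 : Nat.count (keptRow n f) (Nat.nth (keptRow n f) j + 1) =
        Nat.count (keptRow n f) (Nat.nth (keptRow n f) j) + 1 := by
      rw [Nat.count_succ, if_pos (nth_kept hf hs hk0 hj)]
    have h3 : Nat.count (keptRow n f) (Nat.nth (keptRow n f) j) = j := by
      rw [← card_setOf_and_lt, ← kcnt]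
      exact kcnt_nth hf hs hk0 hj
    calc j < j + 1 := Nat.lt_succ_self j
    _ = Nat.count (keptRow n f) (Nat.nth (keptRow n f) j + 1) := by rw [h2, h3]
    _ ≤ Nat.count (keptRow n f) t := Nat.count_monotone _ hlt

lemma nth_kcnt (hf : IsPartition f) (hs : IsSymmetric f) (hk0 : f 0 = k) {t : ℕ}
    (ht : keptRow n f t) :
    kcnt n f t < KC n f ∧ Nat.nth (keptRow n f) (kcnt n f t) = t := by
  classical
  have h1 : kcnt n f t = Nat.count (keptRow n f) t := by rw [kcnt, card_setOf_and_lt]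
  constructor
  · rw [h1, ← Kfin_card (n := n) hf hs hk0]
    exact Nat.count_lt_card _ ht
  · rw [h1]
    exact Nat.nth_count ht

lemma kcnt_le (hf : IsPartition f) (hs : IsSymmetric f) (hk0 : f 0 = k) (t : ℕ) :
    kcnt n f t ≤ KC n f := by
  rw [kcnt, KC, Nat.card_coe_set_eq, Nat.card_coe_set_eq]
  exact Set.ncard_le_ncard (fun j hj => hj.1) (Kfin hf hs hk0)

lemma kcnt_mono (hf : IsPartition f) (hs : IsSymmetric f) (hk0 : f 0 = k) {t t' : ℕ}
    (h : t ≤ t') : kcnt n f t ≤ kcnt n f t' := by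
  rw [kcnt, kcnt, Nat.card_coe_set_eq, Nat.card_coe_set_eq]
  exact Set.ncard_le_ncard (fun j hj => ⟨hj.1, lt_of_lt_of_le hj.2 h⟩)
    ((Set.finite_Iio t').subset (fun j hj => hj.2))

lemma g_eq (hf : IsPartition f) (hs : IsSymmetric f) (hk0 : f 0 = k) {i : ℕ}
    (h : i < KC n f) : PhiCore n f i = kcnt n f (f (Nat.nth (keptRow n f) i)) := by
  have hkr := nth_kept hf hs hk0 h
  have hseteq : {j : ℕ | keptRow n f (Nat.nth (keptRow n f) i) ∧ keptCol n f j ∧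
      j < f (Nat.nth (keptRow n f) i)} =
      {j : ℕ | keptRow n f j ∧ j < f (Nat.nth (keptRow n f) i)} := by
    ext j
    simp only [Set.mem_setOf_eq]
    rw [keptCol_iff_keptRow hs]
    tauto
  unfold PhiCore kcnt
  rw [hseteq]

lemma g_eq0 (hf : IsPartition f) (hs : IsSymmetric f) (hk0 : f 0 = k) {i : ℕ}
    (h : KC n f ≤ i) : PhiCore n f i = 0 := by
  unfold PhiCore
  rw [nth_zero_of_ge hf hs hk0 h]
  have : {j : ℕ | keptRow n f 0 ∧ keptCol n f j ∧ j < f 0} = ∅ := by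
    ext j
    simp only [Set.mem_setOf_eq, Set.mem_empty_iff_false, iff_false]
    intro hj
    exact not_kept0 hj.1
  rw [this]
  simp

lemma g_le (hf : IsPartition f) (hs : IsSymmetric f) (hk0 : f 0 = k) (i : ℕ) :
    PhiCore n f i ≤ KC n f := by
  rcases lt_or_ge i (KC n f) with h | h
  · rw [g_eq hf hs hk0 h]; exact kcnt_le hf hs hk0 _
  · rw [g_eq0 hf hs hk0 h]; exact Nat.zero_le _

lemma g_partition (hf : IsPartition f) (hs : IsSymmetric f) (hk0 : f 0 = k) :
    IsPartition (PhiCore n f) := by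
  constructor
  · intro i i' hii'
    rcases lt_or_ge i' (KC n f) with h' | h'
    · have h : i < KC n f := lt_of_le_of_lt hii' h'
      rw [g_eq hf hs hk0 h, g_eq hf hs hk0 h']
      rcases eq_or_lt_of_le hii' with rfl | hlt
      · exact le_refl _
      · apply kcnt_mono hf hs hk0
        exact hf.1 (le_of_lt (nth_strictmono hf hs hk0 hlt h'))
    · rw [g_eq0 hf hs hk0 h']
      exact Nat.zero_le _
  · exact ⟨KC n f, fun i hi => g_eq0 hf hs hk0 hi⟩

lemma lt_g_iff (hf : IsPartition f) (hs : IsSymmetric f) (hk0 : f 0 = k) {i j : ℕ} :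
    j < PhiCore n f i ↔ (i < KC n f ∧ j < KC n f ∧
      Nat.nth (keptRow n f) j < f (Nat.nth (keptRow n f) i)) := by
  rcases lt_or_ge i (KC n f) with h | h
  · rw [g_eq hf hs hk0 h, lt_kcnt_iff hf hs hk0]
    tauto
  · rw [g_eq0 hf hs hk0 h]
    simp only [Nat.not_lt_zero, false_iff]
    rintro ⟨h1, -⟩
    omega

lemma colLen_g (hf : IsPartition f) (hs : IsSymmetric f) (hk0 : f 0 = k) (j : ℕ) :
    colLen (PhiCore n f) j = PhiCore n f j := by
  rcases lt_or_ge j (KC n f) with hj | hj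
  · have hset : {i : ℕ | j < PhiCore n f i} = Set.Iio (kcnt n f (f (Nat.nth (keptRow n f) j))) := by
      ext i
      simp only [Set.mem_setOf_eq, Set.mem_Iio]
      rw [lt_g_iff hf hs hk0, lt_kcnt_iff hf hs hk0]
      constructor
      · rintro ⟨hi, -, hlt⟩
        refine ⟨hi, ?_⟩
        rw [lt_iff_lt_colLen hf] at hlt
        rwa [hs _] at hlt
      · rintro ⟨hi, hlt⟩
        refine ⟨hi, hj, ?_⟩
        rw [lt_iff_lt_colLen hf]
        rwa [hs _]
    rw [colLen, hset, Nat.card_coe_set_eq, ncard_natIio, g_eq hf hs hk0 hj]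
  · have hset : {i : ℕ | j < PhiCore n f i} = ∅ := by
      ext i
      simp only [Set.mem_setOf_eq, Set.mem_empty_iff_false, iff_false, not_lt]
      exact le_trans (g_le hf hs hk0 i) hj
    rw [colLen, hset, g_eq0 hf hs hk0 hj]
    simp

lemma g_symmetric (hf : IsPartition f) (hs : IsSymmetric f) (hk0 : f 0 = k) :
    IsSymmetric (PhiCore n f) := fun j => colLen_g hf hs hk0 j

end Phi

section Bound

variable {n k : ℕ} {f : ℕ → ℕ}

/-- Deleted (nonempty) rows. -/
def Dset (n k : ℕ) (f : ℕ → ℕ) : Set ℕ :=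
  {j | j < k ∧ (2*n:ℤ) ∣ (aB f j - ((k:ℤ)-1))}

noncomputable def dcnt (n k : ℕ) (f : ℕ → ℕ) (t : ℕ) : ℕ :=
  (Dset n k f ∩ Set.Iio t).ncard

lemma Dfin : (Dset n k f).Finite :=
  (Set.finite_Iio k).subset (fun j hj => hj.1)

lemma kd_sum (hf : IsPartition f) (hs : IsSymmetric f) (hk0 : f 0 = k) {t : ℕ}
    (ht : t ≤ k) : kcnt n f t + dcnt n k f t = t := by
  have hdisj : Disjoint {j : ℕ | keptRow n f j ∧ j < t} (Dset n k f ∩ Set.Iio t) := by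
    rw [Set.disjoint_left]
    rintro j ⟨hj1, -⟩ ⟨hj2, -⟩
    exact (((keptRow_iff hf hs hk0 j).1 hj1).2) hj2.2
  have hunion : {j : ℕ | keptRow n f j ∧ j < t} ∪ (Dset n k f ∩ Set.Iio t) = Set.Iio t := by
    ext j
    simp only [Set.mem_union, Set.mem_setOf_eq, Set.mem_inter_iff, Set.mem_Iio, Dset]
    constructor
    · rintro (⟨-, h⟩ | ⟨-, h⟩) <;> exact h
    · intro hj
      by_cases hkept : keptRow n f j
      · exact Or.inl ⟨hkept, hj⟩
      · refine Or.inr ⟨⟨by omega, ?_⟩, hj⟩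
        rw [keptRow_iff hf hs hk0] at hkept
        push_neg at hkept
        exact hkept (by omega)
  have hcardu := Set.ncard_union_eq hdisj
    ((Set.finite_Iio t).subset (fun j hj => hj.2))
    ((Set.finite_Iio t).subset (fun j hj => hj.2))
  rw [hunion, ncard_natIio] at hcardu
  rw [kcnt, Nat.card_coe_set_eq, dcnt]
  omega

lemma kcnt_k_eq (hf : IsPartition f) (hs : IsSymmetric f) (hk0 : f 0 = k) :
    kcnt n f k = KC n f := by
  have hset : {j : ℕ | keptRow n f j ∧ j < k} = setOf (keptRow n f) := by
    ext j
    simp only [Set.mem_setOf_eq, and_iff_left_iff_imp]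
    exact ⟨fun h => h.1, fun h => ⟨h, kept_lt hf hs hk0 h⟩⟩
  rw [kcnt, hset, KC]

lemma Dtotal (hf : IsPartition f) (hs : IsSymmetric f) (hk0 : f 0 = k) :
    KC n f + (Dset n k f).ncard = k := by
  have h := kd_sum (n := n) hf hs hk0 (le_refl k)
  rw [kcnt_k_eq hf hs hk0] at h
  have h2 : dcnt n k f k = (Dset n k f).ncard := by
    rw [dcnt]
    congr 1
    rw [Set.inter_eq_self_of_subset_left (fun j hj => hj.1)]
  omega

lemma dvd_bounded {m z : ℤ} (hd : m ∣ z) (h1 : -m < z) (h2 : z < m) : z = 0 := by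
  obtain ⟨u, rfl⟩ := hd
  rcases lt_trichotomy u 0 with h | h | h
  · nlinarith
  · simp [h]
  · nlinarith

lemma Dlower (hn : 2 ≤ n) (hk : 1 ≤ k) (hf : IsPartition f) (hc : IsCore (2*n) f)
    (hs : IsSymmetric f) (hk0 : f 0 = k) :
    (2*k-1)/(2*n) + 1 ≤ (Dset n k f).ncard := by
  set D0 := (2*k-1)/(2*n) + 1 with hD0
  have hrow : ∀ t : ℕ, t < D0 → ∃ i, (i < k ∧ 0 < f i ∧ aB f i = (k:ℤ)-1-2*(n:ℤ)*t) := by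
    intro t ht
    have hmul : t * (2*n) ≤ 2*k-1 := by
      have h1 : t ≤ (2*k-1)/(2*n) := by omega
      exact (Nat.le_div_iff_mul_le (by omega : 0 < 2*n)).1 h1
    have hmul2 : t * (2*n) + 1 ≤ 2*k := by omega
    have hmul' : (t:ℤ) * (2*(n:ℤ)) + 1 ≤ 2*(k:ℤ) := by exact_mod_cast hmul2
    apply bead_row hf hs hk0 (runner_r hf hn hc hk0 t)
    linarith
  classical
  set F : ℕ → ℕ := fun t => if h : t < D0 then (hrow t h).choose else 0 with hF
  have hFs : ∀ t (h : t < D0), F t < k ∧ 0 < f (F t) ∧ aB f (F t) = (k:ℤ)-1-2*(n:ℤ)*t := by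
    intro t h
    simp only [hF, dif_pos h]
    exact (hrow t h).choose_spec
  have himg : F '' (Set.Iio D0) ⊆ Dset n k f := by
    rintro - ⟨t, ht, rfl⟩
    obtain ⟨h1, -, h3⟩ := hFs t ht
    refine ⟨h1, ⟨-(t:ℤ), by rw [h3]; ring⟩⟩
  have hinj : Set.InjOn F (Set.Iio D0) := by
    intro t ht t' ht' he
    have h1 := (hFs t ht).2.2
    have h2 := (hFs t' ht').2.2
    rw [he, h2] at h1
    have h3 : (2*(n:ℤ)) * t' = (2*(n:ℤ)) * t := by linarith
    have h4 : (t' : ℤ) = t := mul_left_cancel₀ (by positivity) h3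
    exact_mod_cast h4.symm
  calc D0 = (Set.Iio D0).ncard := (ncard_natIio D0).symm
  _ = (F '' (Set.Iio D0)).ncard := (Set.ncard_image_of_injOn hinj).symm
  _ ≤ (Dset n k f).ncard := Set.ncard_le_ncard himg Dfin

lemma boundHalf (hn : 2 ≤ n) (hk : 1 ≤ k) :
    (k + n - 1)/n ≤ (2*k-1)/(2*n) + 1 := by
  have e1 : k + n - 1 = (k-1) + n := by omega
  rw [e1, Nat.add_div_right _ (by omega : 0 < n)]
  have e2 : (k-1)/n = (2*(k-1))/(2*n) := (Nat.mul_div_mul_left (k-1) n (by omega : 0 < 2)).symm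
  have e3 : (2*(k-1))/(2*n) ≤ (2*k-1)/(2*n) := Nat.div_le_div_right (by omega)
  omega

lemma g0_le (hn : 2 ≤ n) (hk : 1 ≤ k) (hf : IsPartition f) (hc : IsCore (2*n) f)
    (hs : IsSymmetric f) (hk0 : f 0 = k) :
    PhiCore n f 0 ≤ k - (k + n - 1)/n := by
  have h1 : PhiCore n f 0 ≤ KC n f := g_le hf hs hk0 0
  have h2 := Dtotal (n := n) hf hs hk0
  have h3 := le_trans (boundHalf hn hk) (Dlower hn hk hf hc hs hk0)
  set q := (k + n - 1)/n
  omega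

end Bound

section CoreTransfer

variable {n k : ℕ} {f : ℕ → ℕ}

/-- Removed positions on the runner of the first row. -/
def Rr (n k : ℕ) : Set ℤ :=
  {z | (-(k:ℤ) ≤ z ∧ z ≤ (k:ℤ)-1) ∧ (2*n:ℤ) ∣ z-((k:ℤ)-1)}

/-- Removed positions on the runner of the first column. -/
def Rh (n k : ℕ) : Set ℤ :=
  {z | (-(k:ℤ) ≤ z ∧ z ≤ (k:ℤ)-1) ∧ (2*n:ℤ) ∣ z+(k:ℤ)}

noncomputable def rcnt (n k : ℕ) (x : ℤ) : ℕ := ((Rr n k ∪ Rh n k) ∩ Set.Iic x).ncard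

lemma Rr_fin : (Rr n k).Finite :=
  (Set.finite_Icc (-(k:ℤ)) ((k:ℤ)-1)).subset (fun z hz => Set.mem_Icc.2 hz.1)

lemma Rh_fin : (Rh n k).Finite :=
  (Set.finite_Icc (-(k:ℤ)) ((k:ℤ)-1)).subset (fun z hz => Set.mem_Icc.2 hz.1)

lemma odd_not_dvd (hn : 2 ≤ n) : ¬ ((2*n:ℤ) ∣ 2*(k:ℤ)-1) := by
  rintro ⟨u, hu⟩
  have h2 : (2:ℤ) ∣ 2*(k:ℤ)-1 := ⟨(n:ℤ)*u, by linarith⟩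
  omega

lemma RrRh_disj (hn : 2 ≤ n) : Disjoint (Rr n k) (Rh n k) := by
  rw [Set.disjoint_left]
  rintro z ⟨-, hz1⟩ ⟨-, hz2⟩
  apply odd_not_dvd (k := k) hn
  have := dvd_sub hz2 hz1
  have he : z+(k:ℤ) - (z-((k:ℤ)-1)) = 2*(k:ℤ)-1 := by ring
  rwa [he] at this

lemma RrIic (hn : 2 ≤ n) (hk : 1 ≤ k) (hf : IsPartition f) (hc : IsCore (2*n) f)
    (hs : IsSymmetric f) (hk0 : f 0 = k) {t : ℕ} (ht : keptRow n f t) :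
    Rr n k ∩ Set.Iic (aB f t) = aB f '' (Dset n k f ∩ Set.Ici t) := by
  apply Set.Subset.antisymm
  · rintro z ⟨⟨⟨hz1, hz2⟩, hz3⟩, hz4⟩
    simp only [Set.mem_Iic] at hz4
    have hbead : Bead f z := by
      apply runner_r' hf hn hc hk0 hz2
      rw [show (k:ℤ)-1-z = -(z-((k:ℤ)-1)) by ring]
      exact dvd_neg.mpr hz3
    obtain ⟨j, hjk, hjpos, hja⟩ := bead_row hf hs hk0 hbead hz1
    refine ⟨j, ⟨⟨hjk, by rw [hja]; exact hz3⟩, ?_⟩, hja⟩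
    simp only [Set.mem_Ici]
    by_contra hjt
    push_neg at hjt
    have := aB_strictAnti hf hjt
    omega
  · rintro - ⟨j, ⟨⟨hjk, hjd⟩, hjt⟩, rfl⟩
    simp only [Set.mem_Ici] at hjt
    have hjpos : 0 < f j := (pos_iff_lt_k hf hs hk0 j).2 hjk
    refine ⟨⟨⟨?_, bead_le hf hk0 ⟨j, rfl⟩⟩, hjd⟩, ?_⟩
    · have h1 : (1:ℤ) ≤ f j := by exact_mod_cast hjpos
      have h2 : (j:ℤ) < k := by exact_mod_cast hjk
      unfold aB
      omega
    · exact aB_anti hf hjt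

lemma RhIic (hn : 2 ≤ n) (hk : 1 ≤ k) (hf : IsPartition f) (hc : IsCore (2*n) f)
    (hs : IsSymmetric f) (hk0 : f 0 = k) {t : ℕ} (ht : keptRow n f t) :
    Rh n k ∩ Set.Iic (aB f t) = (fun j => -1 - aB f j) '' (Dset n k f ∩ Set.Iio (f t)) := by
  apply Set.Subset.antisymm
  · rintro z ⟨⟨⟨hz1, hz2⟩, hz3⟩, hz4⟩
    simp only [Set.mem_Iic] at hz4
    have hbead : Bead f (-1-z) := by
      apply runner_r' hf hn hc hk0 (by omega)
      rw [show (k:ℤ)-1-(-1-z) = z + k by ring]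
      exact hz3
    obtain ⟨j, hjk, hjpos, hja⟩ := bead_row hf hs hk0 hbead (by omega)
    have hnz : ¬ Bead f z := hole_h hf hn hc hs hk0 hz1 hz3
    have hzx : z ≠ aB f t := fun he => hnz ⟨t, he.symm⟩
    have hbox : j < f t := by
      apply (box_iff hf).1
      rw [cB_eq_neg hs j, hja]
      omega
    refine ⟨j, ⟨⟨hjk, ?_⟩, hbox⟩, by show -1 - aB f j = z; rw [hja]; ring⟩
    rw [hja, show -1-z-((k:ℤ)-1) = -(z+(k:ℤ)) by ring]
    exact dvd_neg.mpr hz3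
  · rintro - ⟨j, ⟨⟨hjk, hjd⟩, hjf⟩, rfl⟩
    simp only [Set.mem_Iio] at hjf
    have hjpos : 0 < f j := (pos_iff_lt_k hf hs hk0 j).2 hjk
    have hle : aB f j ≤ (k:ℤ)-1 := bead_le hf hk0 ⟨j, rfl⟩
    have hge : -((k:ℤ)-1) ≤ aB f j := by
      have h1 : (1:ℤ) ≤ f j := by exact_mod_cast hjpos
      have h2 : (j:ℤ) < k := by exact_mod_cast hjk
      unfold aB
      omega
    show (-1 - aB f j) ∈ Rh n k ∩ Set.Iic (aB f t)
    refine ⟨⟨⟨by omega, by omega⟩, ?_⟩, ?_⟩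
    · rw [show -1 - aB f j + (k:ℤ) = -(aB f j - ((k:ℤ)-1)) by ring]
      exact dvd_neg.mpr hjd
    · simp only [Set.mem_Iic]
      have := (box_iff hf).2 hjf
      rw [cB_eq_neg hs j] at this
      omega

lemma rcnt_eq (hn : 2 ≤ n) (hk : 1 ≤ k) (hf : IsPartition f) (hc : IsCore (2*n) f)
    (hs : IsSymmetric f) (hk0 : f 0 = k) {t : ℕ} (ht : keptRow n f t) :
    rcnt n k (aB f t) + dcnt n k f t = (Dset n k f).ncard + dcnt n k f (f t) := by
  have hsplit : (Rr n k ∪ Rh n k) ∩ Set.Iic (aB f t) =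
      (Rr n k ∩ Set.Iic (aB f t)) ∪ (Rh n k ∩ Set.Iic (aB f t)) :=
    Set.union_inter_distrib_right _ _ _
  have hdisj : Disjoint (Rr n k ∩ Set.Iic (aB f t)) (Rh n k ∩ Set.Iic (aB f t)) :=
    Set.disjoint_of_subset (Set.inter_subset_left) (Set.inter_subset_left) (RrRh_disj hn)
  have h1 : rcnt n k (aB f t) =
      (Rr n k ∩ Set.Iic (aB f t)).ncard + (Rh n k ∩ Set.Iic (aB f t)).ncard := by
    rw [rcnt, hsplit]
    exact Set.ncard_union_eq hdisj (Rr_fin.subset Set.inter_subset_left)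
      (Rh_fin.subset Set.inter_subset_left)
  rw [RrIic hn hk hf hc hs hk0 ht, RhIic hn hk hf hc hs hk0 ht] at h1
  have hinja : Function.Injective (aB f) := (aB_strictAnti hf).injective
  have hinjb : Function.Injective (fun j => -1 - aB f j) := by
    intro a b hab
    simp only at hab
    exact hinja (by omega)
  rw [Set.ncard_image_of_injective _ hinja, Set.ncard_image_of_injective _ hinjb] at h1
  have h2 : (Dset n k f ∩ Set.Iio t).ncard + (Dset n k f ∩ Set.Ici t).ncard =
      (Dset n k f).ncard := by
    rw [← Set.ncard_union_eq ?hd (Dfin.subset Set.inter_subset_left)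
      (Dfin.subset Set.inter_subset_left)]
    · rw [← Set.inter_union_distrib_left, Set.Iio_union_Ici, Set.inter_univ]
    case hd =>
      rw [Set.disjoint_left]
      rintro j ⟨-, hj1⟩ ⟨-, hj2⟩
      simp only [Set.mem_Iio] at hj1
      simp only [Set.mem_Ici] at hj2
      omega
  rw [h1]
  rw [dcnt, dcnt]
  omega

lemma aB_g_eq (hn : 2 ≤ n) (hk : 1 ≤ k) (hf : IsPartition f) (hc : IsCore (2*n) f)
    (hs : IsSymmetric f) (hk0 : f 0 = k) {i : ℕ} (hi : i < KC n f) :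
    aB (PhiCore n f) i = aB f (Nat.nth (keptRow n f) i)
      - rcnt n k (aB f (Nat.nth (keptRow n f) i)) + ((Dset n k f).ncard : ℤ) := by
  set t := Nat.nth (keptRow n f) i with hT
  have ht : keptRow n f t := nth_kept hf hs hk0 hi
  have htk : t < k := kept_lt hf hs hk0 ht
  have hftk : f t ≤ k := by rw [← hk0]; exact hf.1 (Nat.zero_le t)
  have h1 : PhiCore n f i = kcnt n f (f t) := g_eq hf hs hk0 hi
  have h2 : kcnt n f t = i := kcnt_nth hf hs hk0 hi
  have h3 := kd_sum (n := n) hf hs hk0 hftk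
  have h4 := kd_sum (n := n) hf hs hk0 (le_of_lt htk)
  have h5 := rcnt_eq hn hk hf hc hs hk0 ht
  have hL : aB (PhiCore n f) i = (PhiCore n f i : ℤ) - 1 - i := rfl
  have hR : aB f t = (f t : ℤ) - 1 - t := rfl
  rw [h1] at hL
  omega

lemma g_tail (hf : IsPartition f) (hs : IsSymmetric f) (hk0 : f 0 = k) {y : ℤ}
    (hy : y ≤ -1 - (KC n f : ℤ)) : Bead (PhiCore n f) y := by
  refine ⟨(-1-y).toNat, ?_⟩
  have h1 : ((-1-y).toNat : ℤ) = -1-y := Int.toNat_of_nonneg (by omega)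
  have h2 : KC n f ≤ (-1-y).toNat := by omega
  have h3 : PhiCore n f ((-1-y).toNat) = 0 := g_eq0 hf hs hk0 h2
  show (PhiCore n f ((-1-y).toNat) : ℤ) - 1 - ((-1-y).toNat : ℤ) = y
  rw [h3]
  omega

lemma g_closure (hn : 2 ≤ n) (hk : 1 ≤ k) (hf : IsPartition f) (hc : IsCore (2*n) f)
    (hs : IsSymmetric f) (hk0 : f 0 = k) {y : ℤ} (hy : Bead (PhiCore n f) y) :
    Bead (PhiCore n f) (y - (2*(n:ℤ) - 2)) := by
  have hn' : (2:ℤ) ≤ n := by exact_mod_cast hn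
  have hk' : (1:ℤ) ≤ k := by exact_mod_cast hk
  have hDn := Dtotal (n := n) hf hs hk0
  have hDn' : (KC n f : ℤ) + ((Dset n k f).ncard : ℤ) = k := by exact_mod_cast hDn
  rcases le_or_gt (y - (2*(n:ℤ) - 2)) (-1 - (KC n f : ℤ)) with hcase | hcase
  · exact g_tail hf hs hk0 hcase
  obtain ⟨i, hi⟩ := hy
  have hilt : i < KC n f := by
    by_contra hge
    push_neg at hge
    have h3 : PhiCore n f i = 0 := g_eq0 hf hs hk0 hge
    have h4 : aB (PhiCore n f) i = (PhiCore n f i : ℤ) - 1 - i := rfl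
    have hge' : (KC n f : ℤ) ≤ i := by exact_mod_cast hge
    rw [h3] at h4
    omega
  set t := Nat.nth (keptRow n f) i with hT
  have ht : keptRow n f t := nth_kept hf hs hk0 hilt
  have htk : t < k := kept_lt hf hs hk0 ht
  have hcor := aB_g_eq hn hk hf hc hs hk0 hilt
  rw [← hT, hi] at hcor
  set x := aB f t with hX
  have hxbead : Bead f x := ⟨t, rfl⟩
  have hxle : x ≤ (k:ℤ) - 1 := bead_le hf hk0 hxbead
  have hxge : -((k:ℤ)-1) ≤ x := by
    have h1 : (1:ℤ) ≤ f t := by exact_mod_cast ht.1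
    have h2 : (t:ℤ) < k := by exact_mod_cast htk
    rw [hX]
    unfold aB
    omega
  have hnd1 : ¬ (2*n:ℤ) ∣ x - ((k:ℤ)-1) := ((keptRow_iff hf hs hk0 t).1 ht).2
  have hnd2 : ¬ (2*n:ℤ) ∣ x + k := fun hd => (hole_h hf hn hc hs hk0 (by omega) hd) hxbead
  have hxlow : 2*(n:ℤ) - 2 - k ≤ x := by
    have : (0:ℤ) ≤ (rcnt n k x : ℤ) := by positivity
    omega
  have h2n0 : (2*(n:ℤ)) ≠ 0 := by positivity
  have h2npos : (0:ℤ) < 2*(n:ℤ) := by positivity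
  set e1 := (x - ((k:ℤ)-1)) % (2*(n:ℤ)) with hE1
  set e2 := (x + (k:ℤ)) % (2*(n:ℤ)) with hE2
  have he1a : 0 ≤ e1 := Int.emod_nonneg _ h2n0
  have he1b : e1 < 2*(n:ℤ) := Int.emod_lt_of_pos _ h2npos
  have he2a : 0 ≤ e2 := Int.emod_nonneg _ h2n0
  have he2b : e2 < 2*(n:ℤ) := Int.emod_lt_of_pos _ h2npos
  have hpr_dvd : (2*n:ℤ) ∣ (x - e1) - ((k:ℤ)-1) := by
    have h := Int.mul_ediv_add_emod (x - ((k:ℤ)-1)) (2*(n:ℤ))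
    exact ⟨(x - ((k:ℤ)-1)) / (2*(n:ℤ)), by omega⟩
  have hph_dvd : (2*n:ℤ) ∣ (x - e2) + (k:ℤ) := by
    have h := Int.mul_ediv_add_emod (x + (k:ℤ)) (2*(n:ℤ))
    exact ⟨(x + (k:ℤ)) / (2*(n:ℤ)), by omega⟩
  have he1ne : e1 ≠ 0 := fun h0 => hnd1 (Int.dvd_of_emod_eq_zero (hE1 ▸ h0))
  have he2ne : e2 ≠ 0 := fun h0 => hnd2 (Int.dvd_of_emod_eq_zero (hE2 ▸ h0))
  by_cases hspecial : x - e1 = -(k:ℤ)-1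
  · -- the exceptional low position: leads to contradiction with `hcase`
    exfalso
    have hdk : (2*n:ℤ) ∣ 2*(k:ℤ) := by
      have h := hpr_dvd
      rw [hspecial, show -(k:ℤ)-1-((k:ℤ)-1) = -(2*(k:ℤ)) by ring] at h
      exact (dvd_neg).1 h
    have hx2 : x = 2*(n:ℤ) - k - 2 := by omega
    have hsing : (Rr n k ∪ Rh n k) ∩ Set.Iic x = {-(k:ℤ)} := by
      apply Set.Subset.antisymm
      · rintro z ⟨hz, hz2⟩
        simp only [Set.mem_Iic] at hz2
        simp only [Set.mem_singleton_iff]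
        rcases hz with ⟨⟨hw1, hw2⟩, hd⟩ | ⟨⟨hw1, hw2⟩, hd⟩
        · exfalso
          have hd2 : (2*n:ℤ) ∣ z + k + 1 := by
            obtain ⟨u, hu⟩ := hd
            obtain ⟨v, hv⟩ := hdk
            exact ⟨u + v, by linarith⟩
          have := dvd_bounded hd2 (by omega) (by omega)
          omega
        · have := dvd_bounded hd (by omega) (by omega)
          omega
      · rintro z hz
        simp only [Set.mem_singleton_iff] at hz
        subst hz
        exact ⟨Or.inr ⟨⟨by omega, by omega⟩, ⟨0, by ring⟩⟩, by simp only [Set.mem_Iic]; omega⟩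
    have hr1 : rcnt n k x = 1 := by rw [rcnt, hsing]; exact Set.ncard_singleton _
    rw [hr1] at hcor
    push_cast at hcor
    omega
  · -- generic case: two removed positions in `(x-2n, x]`
    set pr := x - e1 with hPR
    set ph := x - e2 with hPH
    have hprw : -(k:ℤ) ≤ pr := by omega
    have hphw : -(k:ℤ) ≤ ph := by
      by_contra hlt2
      push_neg at hlt2
      have hph1 : ph = -(k:ℤ)-1 := by omega
      obtain ⟨u, hu⟩ := hph_dvd
      rw [hph1] at hu
      have h2 : (2:ℤ) ∣ -1 := ⟨(n:ℤ)*u, by linarith⟩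
      omega
    have hprR : pr ∈ Rr n k := ⟨⟨hprw, by omega⟩, hpr_dvd⟩
    have hphR : ph ∈ Rh n k := ⟨⟨hphw, by omega⟩, hph_dvd⟩
    have hprne : pr ≠ ph := by
      intro he
      apply odd_not_dvd (k := k) hn
      have hd := dvd_sub hph_dvd hpr_dvd
      rw [← he, show pr + (k:ℤ) - (pr - ((k:ℤ)-1)) = 2*(k:ℤ)-1 by ring] at hd
      exact hd
    have hIoc : (Rr n k ∪ Rh n k) ∩ Set.Ioc (x - 2*(n:ℤ)) x = {pr, ph} := by
      apply Set.Subset.antisymm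
      · rintro z ⟨hz, hz2⟩
        simp only [Set.mem_Ioc] at hz2
        simp only [Set.mem_insert_iff, Set.mem_singleton_iff]
        rcases hz with ⟨-, hd⟩ | ⟨-, hd⟩
        · have hdv : (2*n:ℤ) ∣ z - pr := by
            obtain ⟨u, hu⟩ := hd
            obtain ⟨v, hv⟩ := hpr_dvd
            exact ⟨u - v, by linarith⟩
          have := dvd_bounded hdv (by omega) (by omega)
          omega
        · have hdv : (2*n:ℤ) ∣ z - ph := by
            obtain ⟨u, hu⟩ := hd
            obtain ⟨v, hv⟩ := hph_dvd
            exact ⟨u - v, by linarith⟩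
          have := dvd_bounded hdv (by omega) (by omega)
          omega
      · intro z hz
        simp only [Set.mem_insert_iff, Set.mem_singleton_iff] at hz
        rcases hz with rfl | rfl
        · exact ⟨Or.inl hprR, by simp only [Set.mem_Ioc]; omega⟩
        · exact ⟨Or.inr hphR, by simp only [Set.mem_Ioc]; omega⟩
    have hcnt2 : ((Rr n k ∪ Rh n k) ∩ Set.Ioc (x - 2*(n:ℤ)) x).ncard = 2 := by
      rw [hIoc]
      exact Set.ncard_pair hprne
    have hrsplit : rcnt n k x = rcnt n k (x - 2*(n:ℤ)) + 2 := by
      have hun : (Rr n k ∪ Rh n k) ∩ Set.Iic x =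
          ((Rr n k ∪ Rh n k) ∩ Set.Iic (x - 2*(n:ℤ))) ∪
          ((Rr n k ∪ Rh n k) ∩ Set.Ioc (x - 2*(n:ℤ)) x) := by
        ext z
        constructor
        · rintro ⟨hz, hz2⟩
          simp only [Set.mem_Iic] at hz2
          rcases le_or_gt z (x - 2*(n:ℤ)) with h | h
          · exact Or.inl ⟨hz, Set.mem_Iic.2 h⟩
          · exact Or.inr ⟨hz, Set.mem_Ioc.2 ⟨h, hz2⟩⟩
        · rintro (⟨hz, hz2⟩ | ⟨hz, hz2⟩)
          · simp only [Set.mem_Iic] at hz2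
            exact ⟨hz, Set.mem_Iic.2 (by omega)⟩
          · exact ⟨hz, Set.mem_Iic.2 (Set.mem_Ioc.1 hz2).2⟩
      have hfinU : (Rr n k ∪ Rh n k).Finite := Rr_fin.union Rh_fin
      have hdisj2 : Disjoint ((Rr n k ∪ Rh n k) ∩ Set.Iic (x - 2*(n:ℤ)))
          ((Rr n k ∪ Rh n k) ∩ Set.Ioc (x - 2*(n:ℤ)) x) := by
        rw [Set.disjoint_left]
        rintro z ⟨-, hz1⟩ ⟨-, hz2⟩
        simp only [Set.mem_Iic] at hz1
        simp only [Set.mem_Ioc] at hz2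
        omega
      rw [rcnt, hun, Set.ncard_union_eq hdisj2 (hfinU.subset Set.inter_subset_left)
        (hfinU.subset Set.inter_subset_left), hcnt2, rcnt]
    have hbead2 : Bead f (x - 2*(n:ℤ)) := by
      obtain ⟨j, hj⟩ := core_closure hf (by omega : 0 < 2*n) hc hxbead
      exact ⟨j, by rw [hj]; push_cast; ring⟩
    rcases le_or_gt (-(k:ℤ)) (x - 2*(n:ℤ)) with hge | hlt
    · obtain ⟨j, hjk, hjpos, hja⟩ := bead_row hf hs hk0 hbead2 hge
      have hjkept : keptRow n f j := by
        rw [keptRow_iff hf hs hk0]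
        refine ⟨hjk, fun hd => hnd1 ?_⟩
        rw [hja] at hd
        obtain ⟨u, hu⟩ := hd
        exact ⟨u + 1, by linarith⟩
      obtain ⟨hlt', hnth⟩ := nth_kcnt hf hs hk0 hjkept
      refine ⟨kcnt n f j, ?_⟩
      rw [aB_g_eq hn hk hf hc hs hk0 hlt', hnth, hja]
      rw [hrsplit] at hcor
      push_cast at hcor ⊢
      omega
    · have hz0 : rcnt n k (x - 2*(n:ℤ)) = 0 := by
        have hempty : (Rr n k ∪ Rh n k) ∩ Set.Iic (x - 2*(n:ℤ)) = ∅ := by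
          ext z
          simp only [Set.mem_empty_iff_false, iff_false, Set.mem_inter_iff, Set.mem_Iic]
          rintro ⟨hz | hz, hz2⟩ <;> (have := hz.1.1; omega)
        rw [rcnt, hempty, Set.ncard_empty]
      apply g_tail hf hs hk0
      rw [hrsplit, hz0] at hcor
      push_cast at hcor
      omega

lemma g_core (hn : 2 ≤ n) (hk : 1 ≤ k) (hf : IsPartition f) (hc : IsCore (2*n) f)
    (hs : IsSymmetric f) (hk0 : f 0 = k) : IsCore (2*n-2) (PhiCore n f) := by
  apply closure_core (g_partition hf hs hk0) (show 0 < 2*n-2 by omega) (colLen_g hf hs hk0)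
  intro x hx
  have h := g_closure hn hk hf hc hs hk0 (hy := hx)
  have hcast : ((2*n-2 : ℕ) : ℤ) = 2*(n:ℤ)-2 := by omega
  rw [hcast]
  exact h

end CoreTransfer

end Stmt3Aux

/-- The image of `Φₙ` restricted to symmetric `2n`-cores with first part `k` is contained in
the set of symmetric `(2n-2)`-cores with first part at most `k - ⌈k/n⌉`. -/
theorem stmt3 (n k : ℕ) (hn : 2 ≤ n) (hk : 1 ≤ k) :
    Set.MapsTo (PhiCore n)
      {f : ℕ → ℕ | IsPartition f ∧ IsCore (2*n) f ∧ IsSymmetric f ∧ f 0 = k}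
      {f : ℕ → ℕ | IsPartition f ∧ IsCore (2*n-2) f ∧ IsSymmetric f ∧
        f 0 ≤ k - (k + n - 1)/n} := by
  rintro f ⟨hpart, hcore, hsym, hk0⟩
  exact ⟨Stmt3Aux.g_partition hpart hsym hk0, Stmt3Aux.g_core hn hk hpart hcore hsym hk0,
    Stmt3Aux.g_symmetric hpart hsym hk0, Stmt3Aux.g0_le hn hk hpart hcore hsym hk0⟩
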